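/- arXiv:2403.11819 — 3 statements merged into one kernel-verified Lean document; each statement's English description precedes it below -/
import Mathlib

section
/- Let A_t = det(DT_t) (DT_t)^{-1} (DT_t)^{-⊤} where DT_t = I + t DV. Then lim_{t→0} (A_t - I)/t = (div V) I - DV - (DV)^⊤. -/
open Matrix Filter Topology Polynomial

/-- Jacobian matrix of `V` at `x`: `(DV)_{i j} = ∂_j V_i`. -/
noncomputable def jacobianMatrix (d : ℕ) (V : (Fin d → ℝ) → (Fin d → ℝ)) (x : Fin d → ℝ) :
    Matrix (Fin d) (Fin d) ℝ :=
  Matrix.of fun i j => fderiv ℝ (fun y => V y i) x (Pi.single j 1)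

attribute [local instance] Matrix.linftyOpNormedAddCommGroup Matrix.linftyOpNormedRing
  Matrix.linftyOpNormedAlgebra

lemma key {d : ℕ} (M : Matrix (Fin d) (Fin d) ℝ) :
    HasDerivAt (fun t : ℝ => ((1 : Matrix (Fin d) (Fin d) ℝ) + t • M).det •
        (((1 : Matrix (Fin d) (Fin d) ℝ) + t • M)⁻¹ *
          (((1 : Matrix (Fin d) (Fin d) ℝ) + t • M)⁻¹)ᵀ))
      (M.trace • (1 : Matrix (Fin d) (Fin d) ℝ) - M - Mᵀ) 0 := by
  have hA : HasDerivAt (fun t : ℝ => (1 : Matrix (Fin d) (Fin d) ℝ) + t • M) M 0 := by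
    exact (((hasDerivAt_id (0:ℝ)).smul_const M).const_add (1 : Matrix (Fin d) (Fin d) ℝ)).congr_deriv (by simp)
  have e0 : ((1 : Matrix (Fin d) (Fin d) ℝ) + (0:ℝ) • M) = 1 := by simp
  set P : ℝ[X] := (det (1 + (X : ℝ[X]) • M.map C)).divX.divX with hP
  have hdet : HasDerivAt (fun t : ℝ => ((1 : Matrix (Fin d) (Fin d) ℝ) + t • M).det) M.trace 0 := by
    have h1 : (fun t : ℝ => ((1 : Matrix (Fin d) (Fin d) ℝ) + t • M).det)
        = fun t : ℝ => 1 + M.trace * t + P.eval t * t ^ 2 := by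
      funext t; rw [Matrix.det_one_add_smul]
    rw [h1]
    have h2 : HasDerivAt (fun t : ℝ => 1 + M.trace * t + P.eval t * t ^ 2)
        (M.trace * 1 + ((P.derivative.eval 0) * 0 ^ 2 + P.eval 0 * (↑2 * 0 ^ 1))) 0 :=
      (((hasDerivAt_id (0:ℝ)).const_mul M.trace).const_add 1).add
        ((P.hasDerivAt 0).mul (hasDerivAt_pow 2 0))
    simpa using h2
  have hinv : HasDerivAt (fun t : ℝ => ((1 : Matrix (Fin d) (Fin d) ℝ) + t • M)⁻¹) (-M) 0 := by
    have h1 := hasFDerivAt_ringInverse (𝕜 := ℝ) (1 : (Matrix (Fin d) (Fin d) ℝ)ˣ)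
    rw [Units.val_one, ← e0] at h1
    have h2 := h1.comp_hasDerivAt 0 hA
    simp only [Matrix.nonsing_inv_eq_ringInverse]
    simp at h2
    exact h2
  have htr : HasDerivAt (fun t : ℝ => (((1 : Matrix (Fin d) (Fin d) ℝ) + t • M)⁻¹)ᵀ) (-Mᵀ) 0 := by
    have hT := (LinearMap.toContinuousLinearMap
        (Matrix.transposeLinearEquiv (Fin d) (Fin d) ℝ ℝ).toLinearMap).hasFDerivAt
      (x := ((1 : Matrix (Fin d) (Fin d) ℝ) + (0:ℝ) • M)⁻¹)
    have h2 := hT.comp_hasDerivAt 0 hinv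
    exact h2.congr_deriv (Matrix.transpose_neg M)
  have hmul := hinv.mul htr
  have h3 := hdet.smul hmul
  rw [e0] at h3
  simp only [inv_one, Matrix.transpose_one, Matrix.det_one, one_mul, mul_one, one_smul] at h3
  refine h3.congr_deriv ?_
  simp only [Pi.mul_apply, zero_smul, add_zero, inv_one, Matrix.transpose_one, mul_one, one_smul]
  abel

/-- With `DT_t = I + t DV` and `A_t = det(DT_t) (DT_t)^{-1} (DT_t)^{-⊤}`, one has
`lim_{t→0} (A_t − I)/t = (div V) I − DV − (DV)^⊤`, pointwise at every `x ∈ D`. -/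
theorem stmt2 (d : ℕ) (D : Set (Fin d → ℝ)) (hD : IsOpen D) (hDb : Bornology.IsBounded D)
    (V : (Fin d → ℝ) → (Fin d → ℝ)) (hV : ContDiffOn ℝ 1 V D)
    (x : Fin d → ℝ) (hx : x ∈ D) :
    Tendsto
      (fun t : ℝ =>
        t⁻¹ •
          ((((1 : Matrix (Fin d) (Fin d) ℝ) + t • jacobianMatrix d V x).det •
              ((((1 : Matrix (Fin d) (Fin d) ℝ) + t • jacobianMatrix d V x)⁻¹) *
                ((((1 : Matrix (Fin d) (Fin d) ℝ) + t • jacobianMatrix d V x)⁻¹)ᵀ))) - 1))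
      (𝓝[≠] 0)
      (𝓝 ((jacobianMatrix d V x).trace • (1 : Matrix (Fin d) (Fin d) ℝ)
            - jacobianMatrix d V x - (jacobianMatrix d V x)ᵀ)) := by
  have h := key (jacobianMatrix d V x)
  replace h := hasDerivAt_iff_tendsto_slope.mp h
  convert h using 2 with t
  simp [slope, inv_one]
  rfl
end

section
/- For a vector field φ = (φ_1,...,φ_d) ∈ C^1 and V ∈ C^1 on a domain Ω ⊂ R^d, one has div(ψ V)-type expansion applied componentwise: the limit lim_{t→0} (1/t)(det(I + t DV)·(φ ∘ T_t) − φ) = (div(φ_1 V), ..., div(φ_d V))^⊤ in L^2(Ω)^d, where T_t = id + tV. -/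
open Matrix Filter MeasureTheory Topology
open scoped ENNReal NNReal

/-- Partial derivative `∂_i f` at `x`. -/
noncomputable def pd {d : ℕ} (i : Fin d) (f : (Fin d → ℝ) → ℝ) (x : Fin d → ℝ) : ℝ :=
  fderiv ℝ f x (Pi.single i 1)

lemma aux_contDiff_det {n : ℕ} {m : WithTop ℕ∞} :
    ContDiff ℝ m (fun M : Fin n → Fin n → ℝ => Matrix.det (Matrix.of M)) := by
  simp only [Matrix.det_apply]
  apply ContDiff.sum
  intro σ _
  have h : ContDiff ℝ m (fun M : Fin n → Fin n → ℝ => ∏ i, M (σ i) i) := by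
    apply contDiff_prod
    intro i _
    exact ((ContinuousLinearMap.proj (R := ℝ) (φ := fun _ : Fin n => ℝ) i).contDiff).comp
      ((ContinuousLinearMap.proj (R := ℝ) (φ := fun _ : Fin n => Fin n → ℝ) (σ i)).contDiff)
  simpa [Units.smul_def, zsmul_eq_mul] using h.const_smul ((Equiv.Perm.sign σ : ℤ) : ℝ)

/-- The total map `F (t, x) = det (1 + t DV(x)) • φ (x + t V(x))`. -/
noncomputable def Ffun (d : ℕ) (φ V : (Fin d → ℝ) → (Fin d → ℝ)) :
    ℝ × (Fin d → ℝ) → (Fin d → ℝ) := fun p =>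
  (((1 : Matrix (Fin d) (Fin d) ℝ) + p.1 • jacobianMatrix d V p.2).det) • φ (p.2 + p.1 • V p.2)

noncomputable def divvec (d : ℕ) (φ V : (Fin d → ℝ) → (Fin d → ℝ)) (x : Fin d → ℝ) :
    Fin d → ℝ := fun i => ∑ j, pd j (fun y => φ y i * V y j) x

section lemmas

variable {d : ℕ} {φ V : (Fin d → ℝ) → (Fin d → ℝ)}

lemma jac_apply (hV : ContDiff ℝ 2 V) (x : Fin d → ℝ) (i j : Fin d) :
    jacobianMatrix d V x i j = fderiv ℝ V x (Pi.single j 1) i := by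
  have h : fderiv ℝ (fun y => V y i) x
      = (ContinuousLinearMap.proj (R := ℝ) (φ := fun _ : Fin d => ℝ) i).comp (fderiv ℝ V x) := by
    exact ((ContinuousLinearMap.proj (R := ℝ) (φ := fun _ : Fin d => ℝ) i).hasFDerivAt.comp x
      ((hV.differentiable (by norm_num)) x).hasFDerivAt).fderiv
  simp [jacobianMatrix, h]

lemma contDiff_jac (hV : ContDiff ℝ 2 V) :
    ContDiff ℝ 1 (fun x => (fun i j => jacobianMatrix d V x i j : Fin d → Fin d → ℝ)) := by
  have hfd : ContDiff ℝ 1 (fun x => fderiv ℝ V x) := hV.fderiv_right (by norm_num)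
  apply contDiff_pi.2
  intro i
  apply contDiff_pi.2
  intro j
  have : ContDiff ℝ 1 (fun x => fderiv ℝ V x (Pi.single j 1) i) := by
    exact (ContinuousLinearMap.proj (R := ℝ) (φ := fun _ : Fin d => ℝ) i).contDiff.comp
      (hfd.clm_apply contDiff_const)
  convert this using 2 with x
  exact jac_apply hV x i j

lemma contDiff_F (hφ : ContDiff ℝ 2 φ) (hV : ContDiff ℝ 2 V) :
    ContDiff ℝ 1 (Ffun d φ V) := by
  have hJ := contDiff_jac hV
  -- the matrix entries map
  have hM : ContDiff ℝ 1 (fun p : ℝ × (Fin d → ℝ) =>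
      (fun i j => ((1 : Matrix (Fin d) (Fin d) ℝ) + p.1 • jacobianMatrix d V p.2) i j
        : Fin d → Fin d → ℝ)) := by
    apply contDiff_pi.2
    intro i
    apply contDiff_pi.2
    intro j
    have : ContDiff ℝ 1 (fun p : ℝ × (Fin d → ℝ) =>
        ((if i = j then (1:ℝ) else 0) + p.1 * jacobianMatrix d V p.2 i j)) := by
      apply contDiff_const.add
      apply contDiff_fst.mul
      exact (((ContinuousLinearMap.proj (R := ℝ) (φ := fun _ : Fin d => ℝ) j).contDiff.comp
        ((ContinuousLinearMap.proj (R := ℝ) (φ := fun _ : Fin d => Fin d → ℝ) i).contDiff)).comp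
        (hJ.comp contDiff_snd))
    convert this using 2 with p
    simp [Matrix.one_apply]
  have hdet : ContDiff ℝ 1 (fun p : ℝ × (Fin d → ℝ) =>
      ((1 : Matrix (Fin d) (Fin d) ℝ) + p.1 • jacobianMatrix d V p.2).det) := by
    have := aux_contDiff_det (n := d) (m := 1) |>.comp hM
    exact this
  have hφc : ContDiff ℝ 1 (fun p : ℝ × (Fin d → ℝ) => φ (p.2 + p.1 • V p.2)) := by
    exact (hφ.of_le (by norm_num)).comp
      (contDiff_snd.add (contDiff_fst.smul ((hV.of_le (by norm_num)).comp contDiff_snd)))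
  exact hdet.smul hφc

lemma F_zero (x : Fin d → ℝ) : Ffun d φ V (0, x) = φ x := by
  simp [Ffun]

lemma hasDerivAt_F_zero (hφ : ContDiff ℝ 2 φ) (hV : ContDiff ℝ 2 V) (x : Fin d → ℝ) :
    HasDerivAt (fun s => Ffun d φ V (s, x)) (divvec d φ V x) 0 := by
  rw [hasDerivAt_pi]
  intro i
  set M := jacobianMatrix d V x with hM
  have hdφ : ∀ k, DifferentiableAt ℝ (fun y => φ y k) x := fun k =>
    ((ContinuousLinearMap.proj (R := ℝ) (φ := fun _ : Fin d => ℝ) k).differentiable.comp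
      (hφ.differentiable (by norm_num))) x
  have hdV : ∀ k, DifferentiableAt ℝ (fun y => V y k) x := fun k =>
    ((ContinuousLinearMap.proj (R := ℝ) (φ := fun _ : Fin d => ℝ) k).differentiable.comp
      (hV.differentiable (by norm_num))) x
  -- derivative of the determinant factor
  have ha : HasDerivAt (fun s : ℝ => ((1 : Matrix (Fin d) (Fin d) ℝ) + s • M).det)
      (Matrix.trace M) 0 := by
    have heq : (fun s : ℝ => ((1 : Matrix (Fin d) (Fin d) ℝ) + s • M).det)
        = fun s => 1 + Matrix.trace M * s +
          (Matrix.det (1 + (Polynomial.X : Polynomial ℝ) • M.map Polynomial.C)).divX.divX.eval s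
            * s ^ 2 := by
      funext s
      exact Matrix.det_one_add_smul s M
    rw [heq]
    have h1 : HasDerivAt (fun s : ℝ => 1 + Matrix.trace M * s) (Matrix.trace M) 0 := by
      simpa using ((hasDerivAt_id (0:ℝ)).const_mul (Matrix.trace M)).const_add 1
    have h2 : HasDerivAt (fun s : ℝ =>
        (Matrix.det (1 + (Polynomial.X : Polynomial ℝ) • M.map Polynomial.C)).divX.divX.eval s
          * s ^ 2) 0 0 := by
      have := (Polynomial.hasDerivAt
        (Matrix.det (1 + (Polynomial.X : Polynomial ℝ) • M.map Polynomial.C)).divX.divX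
        (0:ℝ)).fun_mul (hasDerivAt_pow 2 (0:ℝ))
      simpa using this
    simpa using h1.fun_add h2
  -- derivative of the translated factor
  have hc : HasDerivAt (fun s : ℝ => x + s • V x) (V x) 0 := by
    simpa using ((hasDerivAt_id (0:ℝ)).smul_const (V x)).const_add x
  have hb : HasDerivAt (fun s : ℝ => φ (x + s • V x) i)
      (fderiv ℝ (fun y => φ y i) x (V x)) 0 := by
    have h0 : x + (0:ℝ) • V x = x := by simp
    have hdφi : HasFDerivAt (fun y => φ y i) (fderiv ℝ (fun y => φ y i) x) (x + (0:ℝ) • V x) := by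
      rw [h0]; exact (hdφ i).hasFDerivAt
    exact hdφi.comp_hasDerivAt 0 hc
  have hprod := ha.fun_mul hb
  have hval : Matrix.trace M * φ (x + (0:ℝ) • V x) i
      + ((1 : Matrix (Fin d) (Fin d) ℝ) + (0:ℝ) • M).det * fderiv ℝ (fun y => φ y i) x (V x)
      = divvec d φ V x i := by
    have hVx : V x = ∑ j, (V x j) • (Pi.single j 1 : Fin d → ℝ) := by
      funext k
      simp [Pi.single_apply, Finset.sum_apply, mul_comm]
    have hlin : fderiv ℝ (fun y => φ y i) x (V x)
        = ∑ j, V x j * fderiv ℝ (fun y => φ y i) x (Pi.single j 1) := by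
      conv_lhs => rw [hVx]
      rw [map_sum]
      simp [smul_eq_mul]
    have htr : Matrix.trace M = ∑ j, fderiv ℝ (fun y => V y j) x (Pi.single j 1) := by
      simp [Matrix.trace, Matrix.diag, hM, jacobianMatrix]
    have hpd : ∀ j, pd j (fun y => φ y i * V y j) x
        = φ x i * fderiv ℝ (fun y => V y j) x (Pi.single j 1)
          + V x j * fderiv ℝ (fun y => φ y i) x (Pi.single j 1) := by
      intro j
      have := fderiv_fun_mul (𝕜 := ℝ) (hdφ i) (hdV j)
      simp only [pd, this]
      simp
    simp only [divvec, hpd]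
    rw [Finset.sum_add_distrib, ← Finset.mul_sum, ← htr, ← hlin]
    simp [mul_comm]
  rw [← hval]
  exact hprod

lemma jac_zero (hV : ContDiff ℝ 2 V) {x : Fin d → ℝ} (hx : x ∉ tsupport V) :
    jacobianMatrix d V x = 0 := by
  have hopen : IsOpen (tsupport V)ᶜ := (isClosed_tsupport V).isOpen_compl
  have hev : V =ᶠ[𝓝 x] 0 := by
    filter_upwards [hopen.mem_nhds hx] with y hy
    exact image_eq_zero_of_notMem_tsupport hy
  ext i j
  have hevi : (fun y => V y i) =ᶠ[𝓝 x] (fun _ => 0) := by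
    filter_upwards [hev] with y hy
    simp [hy]
  have := hevi.fderiv_eq (𝕜 := ℝ)
  simp [jacobianMatrix, this]

lemma divvec_zero (hV : ContDiff ℝ 2 V) {x : Fin d → ℝ} (hx : x ∉ tsupport V) :
    divvec d φ V x = 0 := by
  have hopen : IsOpen (tsupport V)ᶜ := (isClosed_tsupport V).isOpen_compl
  funext i
  have hz : ∀ j : Fin d, pd j (fun y => φ y i * V y j) x = 0 := by
    intro j
    have hev : (fun y => φ y i * V y j) =ᶠ[𝓝 x] (fun _ => 0) := by
      filter_upwards [hopen.mem_nhds hx] with y hy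
      simp [image_eq_zero_of_notMem_tsupport hy]
    have := hev.fderiv_eq (𝕜 := ℝ)
    simp [pd, this]
  simp [divvec, hz]

lemma F_off_support (hV : ContDiff ℝ 2 V) {x : Fin d → ℝ} (hx : x ∉ tsupport V) (t : ℝ) :
    Ffun d φ V (t, x) = φ x := by
  simp [Ffun, jac_zero hV hx, image_eq_zero_of_notMem_tsupport hx]

end lemmas

/-- With `T_t = id + tV`, one has
`lim_{t→0} (1/t)(det(I + t DV)·(φ ∘ T_t) − φ) = (div(φ_1 V), …, div(φ_d V))^⊤` in `L²(Ω)^d`. -/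
theorem stmt4 (d : ℕ) (Ω : Set (Fin d → ℝ)) (hΩ : IsOpen Ω)
    (hΩb : Bornology.IsBounded Ω) (hΩm : MeasurableSet Ω)
    (φ V : (Fin d → ℝ) → (Fin d → ℝ))
    (hφ : ContDiff ℝ 2 φ)
    (hV : ContDiff ℝ 2 V) (hVsupp : HasCompactSupport V) (hVΩ : tsupport V ⊆ Ω) :
    Tendsto
      (fun t : ℝ =>
        eLpNorm
          (fun x =>
            t⁻¹ • ((((1 : Matrix (Fin d) (Fin d) ℝ) + t • jacobianMatrix d V x).det •
                φ (x + t • V x)) - φ x)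
              - fun i => ∑ j, pd j (fun y => φ y i * V y j) x)
          2 (volume.restrict Ω))
      (𝓝[≠] 0) (𝓝 0) := by
  classical
  set F := Ffun d φ V with hFdef
  set K : Set (Fin d → ℝ) := tsupport V with hKdef
  have hKc : IsCompact K := hVsupp
  have hFc1 : ContDiff ℝ 1 F := contDiff_F hφ hV
  set G : ℝ × (Fin d → ℝ) → (Fin d → ℝ) := fun p => fderiv ℝ F p (1, 0) with hGdef
  have hGcont : Continuous G := by
    have h1 : Continuous (fun p => fderiv ℝ F p) := hFc1.continuous_fderiv one_ne_zero
    exact h1.clm_apply continuous_const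
  have hslice : ∀ (t : ℝ) (x : Fin d → ℝ), HasDerivAt (fun s => F (s, x)) (G (t, x)) t := by
    intro t x
    have h1 : HasDerivAt (fun s : ℝ => (s, x)) ((1 : ℝ), (0 : Fin d → ℝ)) t :=
      (hasDerivAt_id t).prodMk (hasDerivAt_const t x)
    exact ((hFc1.differentiable one_ne_zero (t, x)).hasFDerivAt).comp_hasDerivAt t h1
  have hG0 : ∀ x : Fin d → ℝ, G (0, x) = divvec d φ V x := fun x =>
    (hslice 0 x).unique (hasDerivAt_F_zero hφ hV x)
  -- the integrand, rewritten
  have hInt : ∀ (t : ℝ) (x : Fin d → ℝ),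
      (t⁻¹ • ((((1 : Matrix (Fin d) (Fin d) ℝ) + t • jacobianMatrix d V x).det •
          φ (x + t • V x)) - φ x) - fun i => ∑ j, pd j (fun y => φ y i * V y j) x)
        = t⁻¹ • (F (t, x) - F (0, x)) - G (0, x) := by
    intro t x
    rw [hG0, hFdef, F_zero]
    rfl
  have hμ : volume Ω < ⊤ := hΩb.measure_lt_top
  rw [ENNReal.tendsto_nhds_zero]
  intro ε hε
  set B : ℝ≥0∞ := (volume Ω) ^ ((2 : ℝ≥0∞).toReal)⁻¹ with hBdef
  have hBne : B ≠ ⊤ := by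
    apply ENNReal.rpow_ne_top_of_nonneg (by norm_num) hμ.ne
  set ε' : ℝ≥0∞ := min (ε / (B + 1)) 1 with hε'def
  have hε'pos : 0 < ε' := by
    apply lt_min _ one_pos
    apply ENNReal.div_pos hε.ne'
    exact ENNReal.add_ne_top.2 ⟨hBne, by norm_num⟩
  have hε'ne : ε' ≠ ⊤ := by
    apply ne_top_of_le_ne_top (by norm_num) (min_le_right _ _)
  set εr : ℝ := ε'.toReal with hεrdef
  have hεr_pos : 0 < εr := ENNReal.toReal_pos hε'pos.ne' hε'ne
  have hofReal : ENNReal.ofReal εr = ε' := ENNReal.ofReal_toReal hε'ne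
  -- tube lemma
  set U : Set (ℝ × (Fin d → ℝ)) := {p | ‖G p - G (0, p.2)‖ < εr} with hUdef
  have hUopen : IsOpen U := by
    have : Continuous fun p : ℝ × (Fin d → ℝ) => ‖G p - G (0, p.2)‖ :=
      (hGcont.sub (hGcont.comp (continuous_const.prodMk continuous_snd))).norm
    exact isOpen_lt this continuous_const
  have hsub : ({(0 : ℝ)} : Set ℝ) ×ˢ K ⊆ U := by
    rintro ⟨t, x⟩ ⟨ht, hx⟩
    simp only [Set.mem_singleton_iff] at ht
    subst ht
    simp only [hUdef, Set.mem_setOf_eq, sub_self, norm_zero]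
    exact hεr_pos
  obtain ⟨u, v, huo, hvo, hu0, hKv, huv⟩ :=
    generalized_tube_lemma isCompact_singleton hKc hUopen hsub
  obtain ⟨δ, hδpos, hδball⟩ := Metric.isOpen_iff.1 huo 0 (hu0 rfl)
  filter_upwards [inter_mem_nhdsWithin _ (Metric.ball_mem_nhds (0:ℝ) hδpos)]
    with t ht
  obtain ⟨htne, htδ⟩ := ht
  have htne' : t ≠ 0 := htne
  have htabs : |t| < δ := by simpa [Real.dist_eq] using htδ
  -- pointwise bound
  have hbound : ∀ x : Fin d → ℝ,
      ‖(t⁻¹ • ((((1 : Matrix (Fin d) (Fin d) ℝ) + t • jacobianMatrix d V x).det •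
          φ (x + t • V x)) - φ x) - fun i => ∑ j, pd j (fun y => φ y i * V y j) x)‖ ≤ εr := by
    intro x
    rw [hInt]
    by_cases hx : x ∈ K
    · -- mean value argument
      have hKset : ∀ s : ℝ, s ∈ Set.uIcc 0 t → (s, x) ∈ U := by
        intro s hs
        apply huv
        constructor
        · apply hδball
          simp only [Metric.mem_ball, Real.dist_eq, sub_zero]
          calc |s| ≤ |t| := by
                rcases le_total 0 t with h | h
                · rw [Set.uIcc_of_le h] at hs
                  rw [abs_of_nonneg hs.1, abs_of_nonneg h]; exact hs.2
                · rw [Set.uIcc_of_ge h] at hs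
                  rw [abs_of_nonpos hs.2, abs_of_nonpos h]; exact neg_le_neg hs.1
            _ < δ := htabs
        · exact hKv hx
      set f : ℝ → (Fin d → ℝ) := fun s => F (s, x) - s • G (0, x) with hfdef
      have hderiv : ∀ s ∈ Set.uIcc 0 t,
          HasDerivWithinAt f (G (s, x) - G (0, x)) (Set.uIcc 0 t) s := by
        intro s hs
        have h := (hslice s x).fun_sub ((hasDerivAt_id s).smul_const (G (0, x)))
        have h' : HasDerivAt f (G (s, x) - G (0, x)) s := by simpa using h
        exact h'.hasDerivWithinAt
      have hbnd : ∀ s ∈ Set.uIcc 0 t, ‖G (s, x) - G (0, x)‖ ≤ εr := by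
        intro s hs
        exact le_of_lt (hKset s hs)
      have hmvt := Convex.norm_image_sub_le_of_norm_hasDerivWithin_le hderiv hbnd
        (convex_uIcc 0 t) Set.left_mem_uIcc Set.right_mem_uIcc
      -- hmvt : ‖f t - f 0‖ ≤ εr * ‖t - 0‖
      have hf0 : f 0 = F (0, x) := by simp [hfdef]
      have hft : f t = F (t, x) - t • G (0, x) := rfl
      have key : ‖F (t, x) - F (0, x) - t • G (0, x)‖ ≤ εr * |t| := by
        have : F (t, x) - F (0, x) - t • G (0, x) = f t - f 0 := by
          rw [hft, hf0]; abel
        rw [this]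
        simpa [Real.norm_eq_abs] using hmvt
      have heq2 : t⁻¹ • (F (t, x) - F (0, x)) - G (0, x)
          = t⁻¹ • (F (t, x) - F (0, x) - t • G (0, x)) := by
        rw [smul_sub t⁻¹ (F (t, x) - F (0, x)) (t • G (0, x)), smul_smul,
          inv_mul_cancel₀ htne', one_smul]
      rw [heq2, norm_smul]
      calc ‖t⁻¹‖ * ‖F (t, x) - F (0, x) - t • G (0, x)‖
          ≤ |t|⁻¹ * (εr * |t|) := by
            rw [Real.norm_eq_abs, abs_inv]
            exact mul_le_mul_of_nonneg_left key (by positivity)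
        _ = εr := by
            field_simp
    · -- off the support everything vanishes
      rw [hFdef, F_off_support hV hx t, F_zero, hG0, divvec_zero hV hx]
      simp [le_of_lt hεr_pos]
  -- conclude via the L² bound
  have hb2 := eLpNorm_le_of_ae_bound (μ := volume.restrict Ω) (p := 2)
    (f := fun x =>
      t⁻¹ • ((((1 : Matrix (Fin d) (Fin d) ℝ) + t • jacobianMatrix d V x).det •
          φ (x + t • V x)) - φ x) - fun i => ∑ j, pd j (fun y => φ y i * V y j) x)
    (C := εr) (ae_of_all _ hbound)
  refine le_trans hb2 ?_
  have hrest : (volume.restrict Ω) Set.univ = volume Ω := by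
    simp [Measure.restrict_apply_univ]
  rw [hrest, hofReal]
  calc (volume Ω) ^ ((2 : ℝ≥0∞).toReal)⁻¹ * ε'
      ≤ (B + 1) * (ε / (B + 1)) := by
        apply mul_le_mul
        · exact le_trans (le_refl B) (le_add_of_nonneg_right zero_le)
        · exact min_le_left _ _
        · exact zero_le
        · exact zero_le
    _ ≤ ε := ENNReal.mul_div_le
end

section
/- The map t ↦ φ ∘ T_t from [0,ε] to H^1(Ω)^d is differentiable at t = 0 with derivative Dφ V, i.e. lim_{t→0} (1/t)(φ ∘ T_t − φ) = Dφ V in L^2, for φ ∈ H^2(D)^d. -/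
open Filter MeasureTheory Topology

/-- The map `t ↦ φ ∘ T_t` is differentiable at `t = 0` with derivative `Dφ V`:
`lim_{t→0} (1/t)(φ ∘ T_t − φ) = Dφ V` in `L²(D)^d`, for `φ ∈ H²(D)^d` (here `C²` with
square-integrable derivatives) and `T_t = id + tV`. -/
theorem stmt6 (d : ℕ) (D : Set (Fin d → ℝ)) (hD : IsOpen D)
    (hDb : Bornology.IsBounded D) (hDm : MeasurableSet D)
    (φ : (Fin d → ℝ) → (Fin d → ℝ))
    (hφ : ContDiff ℝ 2 φ)
    (hφ0 : MemLp φ 2 (volume.restrict D))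
    (hφ1 : MemLp (fderiv ℝ φ) 2 (volume.restrict D))
    (hφ2 : MemLp (fderiv ℝ (fderiv ℝ φ)) 2 (volume.restrict D))
    (V : (Fin d → ℝ) → (Fin d → ℝ))
    (hV : ContDiff ℝ 2 V) (hVsupp : HasCompactSupport V) (hVD : tsupport V ⊆ D) :
    Tendsto
      (fun t : ℝ =>
        eLpNorm (fun x => t⁻¹ • (φ (x + t • V x) - φ x) - fderiv ℝ φ x (V x)) 2
          (volume.restrict D))
      (𝓝[≠] 0) (𝓝 0) := by
  -- bound on `V`
  obtain ⟨M, hM⟩ := hV.continuous.bounded_above_of_compact_support hVsupp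
  have hM0 : 0 ≤ M := le_trans (norm_nonneg _) (hM 0)
  -- the support of `V` is contained in a closed ball of radius `R ≥ 0`
  obtain ⟨R₀, hR₀⟩ := hVsupp.isBounded.subset_closedBall 0
  set R : ℝ := max R₀ 0 with hRdef
  have hR : tsupport V ⊆ Metric.closedBall 0 R :=
    hR₀.trans (Metric.closedBall_subset_closedBall (le_max_left _ _))
  have hR0 : 0 ≤ R := le_max_right _ _
  -- the compact set where everything happens
  set K : Set (Fin d → ℝ) := Metric.closedBall 0 (R + M) with hKdef
  have hKconv : Convex ℝ K := convex_closedBall _ _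
  have hKcpt : IsCompact K := isCompact_closedBall _ _
  -- second derivative of φ is continuous, bounded on K
  have hφC1 : ContDiff ℝ 1 (fderiv ℝ φ) := hφ.fderiv_right (by norm_num)
  have hcont2 : Continuous (fderiv ℝ (fderiv ℝ φ)) := hφC1.continuous_fderiv (by norm_num)
  obtain ⟨C, hC⟩ := hKcpt.exists_bound_of_continuousOn (f := fderiv ℝ (fderiv ℝ φ)) hcont2.continuousOn
  have h0K : (0 : Fin d → ℝ) ∈ K := by
    simp [hKdef, Metric.mem_closedBall, add_nonneg hR0 hM0]
  have hC0 : 0 ≤ C := le_trans (norm_nonneg _) (hC 0 h0K)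
  have hφdiff : Differentiable ℝ φ := hφ.differentiable (by norm_num)
  have hφ1diff : Differentiable ℝ (fderiv ℝ φ) := hφC1.differentiable (by norm_num)
  -- Lipschitz estimate for `fderiv φ` on `K`
  have hLip : ∀ x ∈ K, ∀ y ∈ K, ‖fderiv ℝ φ y - fderiv ℝ φ x‖ ≤ C * ‖y - x‖ := by
    intro x hx y hy
    exact hKconv.norm_image_sub_le_of_norm_fderiv_le (fun z _ => hφ1diff z)
      (fun z hz => hC z hz) hx hy
  -- pointwise bound on the difference quotient
  have key : ∀ t : ℝ, t ≠ 0 → |t| ≤ 1 → ∀ x : Fin d → ℝ,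
      ‖t⁻¹ • (φ (x + t • V x) - φ x) - fderiv ℝ φ x (V x)‖ ≤ C * M ^ 2 * |t| := by
    intro t ht ht1 x
    by_cases hx : x ∈ tsupport V
    · set h : Fin d → ℝ := t • V x with hhdef
      have hhnorm : ‖h‖ ≤ |t| * M := by
        rw [hhdef, norm_smul, Real.norm_eq_abs]
        exact mul_le_mul_of_nonneg_left (hM x) (abs_nonneg t)
      have hhM : ‖h‖ ≤ M := hhnorm.trans (by nlinarith [abs_nonneg t])
      have hxR : ‖x‖ ≤ R := by
        simpa [Metric.mem_closedBall, dist_zero_right] using hR hx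
      have hxK : x ∈ K := by
        simp only [hKdef, Metric.mem_closedBall, dist_zero_right]
        linarith
      have hxhK : x + h ∈ K := by
        simp only [hKdef, Metric.mem_closedBall, dist_zero_right]
        calc ‖x + h‖ ≤ ‖x‖ + ‖h‖ := norm_add_le _ _
          _ ≤ R + M := by linarith
      -- the segment from x to x + h lies in K
      have hseg : segment ℝ x (x + h) ⊆ K := hKconv.segment_subset hxK hxhK
      -- on the segment, the derivative is close to `fderiv φ x`
      have hsegbd : ∀ y ∈ segment ℝ x (x + h), ‖fderiv ℝ φ y - fderiv ℝ φ x‖ ≤ C * ‖h‖ := by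
        intro y hy
        have hyx : ‖y - x‖ ≤ ‖h‖ := by
          have : segment ℝ x (x + h) ⊆ Metric.closedBall x ‖h‖ :=
            (convex_closedBall x ‖h‖).segment_subset (Metric.mem_closedBall_self (norm_nonneg h))
              (by simp [Metric.mem_closedBall, dist_eq_norm])
          simpa [Metric.mem_closedBall, dist_eq_norm] using this hy
        calc ‖fderiv ℝ φ y - fderiv ℝ φ x‖ ≤ C * ‖y - x‖ := hLip x hxK y (hseg hy)
          _ ≤ C * ‖h‖ := mul_le_mul_of_nonneg_left hyx hC0
      -- Taylor estimate
      have hTaylor : ‖φ (x + h) - φ x - fderiv ℝ φ x ((x + h) - x)‖ ≤ (C * ‖h‖) * ‖(x + h) - x‖ :=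
        (convex_segment x (x + h)).norm_image_sub_le_of_norm_hasFDerivWithin_le'
          (fun y _ => (hφdiff y).hasFDerivAt.hasFDerivWithinAt) hsegbd
          (left_mem_segment ℝ x (x + h)) (right_mem_segment ℝ x (x + h))
      have hsub : (x + h) - x = h := add_sub_cancel_left x h
      rw [hsub] at hTaylor
      -- rewrite the difference quotient
      have heq : t⁻¹ • (φ (x + h) - φ x - fderiv ℝ φ x h)
          = t⁻¹ • (φ (x + h) - φ x) - fderiv ℝ φ x (V x) := by
        rw [hhdef, (fderiv ℝ φ x).map_smul, smul_sub, smul_smul, inv_mul_cancel₀ ht, one_smul]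
      calc ‖t⁻¹ • (φ (x + t • V x) - φ x) - fderiv ℝ φ x (V x)‖
          = ‖t⁻¹ • (φ (x + h) - φ x - fderiv ℝ φ x h)‖ := by rw [heq, hhdef]
        _ = |t|⁻¹ * ‖φ (x + h) - φ x - fderiv ℝ φ x h‖ := by
            rw [norm_smul, Real.norm_eq_abs, abs_inv]
        _ ≤ |t|⁻¹ * ((C * ‖h‖) * ‖h‖) := by
            exact mul_le_mul_of_nonneg_left hTaylor (by positivity)
        _ ≤ |t|⁻¹ * ((C * (|t| * M)) * (|t| * M)) := by
            have hh0 := norm_nonneg h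
            apply mul_le_mul_of_nonneg_left _ (by positivity)
            calc C * ‖h‖ * ‖h‖ = C * (‖h‖ * ‖h‖) := by ring
              _ ≤ C * ((|t| * M) * (|t| * M)) :=
                  mul_le_mul_of_nonneg_left (mul_self_le_mul_self hh0 hhnorm) hC0
              _ = C * (|t| * M) * (|t| * M) := by ring
        _ = C * M ^ 2 * |t| := by
            have ht' : |t| ≠ 0 := by simpa using ht
            field_simp
    · have hVx : V x = 0 := image_eq_zero_of_notMem_tsupport hx
      simp only [hVx, smul_zero, add_zero, sub_self, map_zero, sub_zero, norm_zero]
      positivity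
  -- L² bound
  have hbnd : ∀ t : ℝ, t ≠ 0 → |t| ≤ 1 →
      eLpNorm (fun x => t⁻¹ • (φ (x + t • V x) - φ x) - fderiv ℝ φ x (V x)) 2
        (volume.restrict D)
      ≤ volume D ^ ((2 : ENNReal).toReal)⁻¹ * ENNReal.ofReal (C * M ^ 2 * |t|) := by
    intro t ht ht1
    have := eLpNorm_le_of_ae_bound (p := 2) (μ := volume.restrict D)
      (f := fun x => t⁻¹ • (φ (x + t • V x) - φ x) - fderiv ℝ φ x (V x))
      (C := C * M ^ 2 * |t|) (ae_of_all _ (key t ht ht1))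
    simpa [Measure.restrict_apply_univ] using this
  -- the bound tends to 0
  have hvol : volume D ^ ((2 : ENNReal).toReal)⁻¹ ≠ ⊤ :=
    ENNReal.rpow_ne_top_of_nonneg (by norm_num) hDb.measure_lt_top.ne
  have hlim : Tendsto (fun t : ℝ =>
      volume D ^ ((2 : ENNReal).toReal)⁻¹ * ENNReal.ofReal (C * M ^ 2 * |t|)) (𝓝[≠] 0) (𝓝 0) := by
    have hc : Continuous fun t : ℝ => ENNReal.ofReal (C * M ^ 2 * |t|) :=
      ENNReal.continuous_ofReal.comp (continuous_const.mul continuous_abs)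
    have h1 : Tendsto (fun t : ℝ => ENNReal.ofReal (C * M ^ 2 * |t|)) (𝓝[≠] 0) (𝓝 0) := by
      have := (hc.tendsto 0).mono_left (nhdsWithin_le_nhds (s := {(0:ℝ)}ᶜ))
      simpa using this
    have := ENNReal.Tendsto.const_mul (a := volume D ^ ((2 : ENNReal).toReal)⁻¹) h1 (Or.inr hvol)
    simpa using this
  -- squeeze
  refine tendsto_of_tendsto_of_tendsto_of_le_of_le' tendsto_const_nhds hlim
    (Eventually.of_forall fun t => zero_le) ?_
  have hev : ∀ᶠ t : ℝ in 𝓝[≠] 0, |t| ≤ 1 := by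
    apply eventually_nhdsWithin_of_eventually_nhds
    have : ∀ᶠ t : ℝ in 𝓝 0, |t - 0| < 1 := eventually_abs_sub_lt 0 one_pos
    filter_upwards [this] with t ht
    simpa using ht.le
  filter_upwards [self_mem_nhdsWithin, hev] with t ht ht1
  exact hbnd t ht ht1
end
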